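/- Let a, c > 0, let k > 3, and let s ≥ 0. Then (k/(3·a^{k/3}·c^k))·∫₀^{∞} exp(−s·p)·p^{k/3 − 1}·exp(−p^{k/3}/(a^{k/3}·c^k)) dp = Σ_{n=0}^{∞} ((−s·a·c³)^n/n!)·Γ(3n/k + 1), where the series on the right converges absolutely. (Laplace transform of the harvested wind power, Theorem 3(b).) -/

import Mathlib

open MeasureTheory Real

private lemma gamma_ratio_le {α x : ℝ} (hα0 : 0 < α) (hα1 : α < 1) (hx : 0 < x) :
    Real.Gamma (x + α) ≤ Real.Gamma x * x ^ α := by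
  have hG : 0 < Real.Gamma x := Real.Gamma_pos_of_pos hx
  have h := Real.Gamma_mul_add_mul_le_rpow_Gamma_mul_rpow_Gamma hx
    (by linarith : (0:ℝ) < x + 1) (by linarith : (0:ℝ) < 1 - α) hα0 (by ring)
  rw [show (1 - α) * x + α * (x + 1) = x + α by ring, Real.Gamma_add_one hx.ne'] at h
  calc Real.Gamma (x + α) ≤ Real.Gamma x ^ (1 - α) * (x * Real.Gamma x) ^ α := h
    _ = Real.Gamma x * x ^ α := by
        rw [Real.mul_rpow hx.le hG.le,
          show Real.Gamma x ^ (1 - α) * (x ^ α * Real.Gamma x ^ α)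
            = Real.Gamma x ^ (1 - α) * Real.Gamma x ^ α * x ^ α by ring,
          ← Real.rpow_add hG, show (1:ℝ) - α + α = 1 by ring, Real.rpow_one]

private lemma summable_gamma_series {l α : ℝ} (hl : 0 ≤ l) (hα0 : 0 < α) (hα1 : α < 1) :
    Summable fun n : ℕ => l ^ n / n.factorial * Real.Gamma (α * n + 1) := by
  have hev : ∀ᶠ n : ℕ in Filter.atTop, l * ((n : ℝ) + 1) ^ (α - 1) ≤ 1 / 2 := by
    have h0 : Filter.Tendsto (fun n : ℕ => l * ((n : ℝ) + 1) ^ (α - 1))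
        Filter.atTop (nhds (l * 0)) := by
      apply Filter.Tendsto.const_mul
      have h1 := tendsto_rpow_neg_atTop (y := 1 - α) (by linarith)
      have h2 : Filter.Tendsto (fun n : ℕ => (n : ℝ) + 1) Filter.atTop Filter.atTop :=
        Filter.tendsto_atTop_add_const_right _ 1 tendsto_natCast_atTop_atTop
      have := h1.comp h2
      simpa [Function.comp_def, neg_sub] using this
    rw [mul_zero] at h0
    exact h0.eventually_le_const (by norm_num)
  apply summable_of_ratio_norm_eventually_le (r := 1 / 2) (by norm_num)
  filter_upwards [hev] with n hn
  have hx : (0 : ℝ) < α * n + 1 := by positivity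
  have hG : 0 < Real.Gamma (α * n + 1) := Real.Gamma_pos_of_pos hx
  have hG' : 0 < Real.Gamma (α * ((n : ℕ) + 1 : ℕ) + 1) :=
    Real.Gamma_pos_of_pos (by positivity)
  have h1 : Real.Gamma (α * ((n : ℕ) + 1 : ℕ) + 1)
      ≤ Real.Gamma (α * n + 1) * (α * n + 1) ^ α := by
    have h := gamma_ratio_le hα0 hα1 hx
    rw [show (α * (n : ℝ) + 1) + α = α * (((n : ℕ) + 1 : ℕ) : ℝ) + 1 by push_cast; ring] at h
    exact h
  have hnp : (0 : ℝ) < (n : ℝ) + 1 := by positivity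
  have h3 : l * (α * (n : ℝ) + 1) ^ α ≤ 1 / 2 * ((n : ℝ) + 1) := by
    have h2 : (α * (n : ℝ) + 1) ^ α ≤ ((n : ℝ) + 1) ^ α := by
      apply Real.rpow_le_rpow hx.le _ hα0.le
      nlinarith [(Nat.cast_nonneg n : (0:ℝ) ≤ n)]
    calc l * (α * (n : ℝ) + 1) ^ α ≤ l * ((n : ℝ) + 1) ^ α := by
          exact mul_le_mul_of_nonneg_left h2 hl
      _ = l * ((n : ℝ) + 1) ^ (α - 1) * ((n : ℝ) + 1) := by
          rw [mul_assoc, ← Real.rpow_add_one hnp.ne']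
          norm_num
      _ ≤ 1 / 2 * ((n : ℝ) + 1) := by
          exact mul_le_mul_of_nonneg_right hn hnp.le
  have hfact : (((n + 1).factorial : ℕ) : ℝ) = ((n : ℝ) + 1) * (n.factorial : ℝ) := by
    rw [Nat.factorial_succ]; push_cast; ring
  have hfn : (0 : ℝ) < (n.factorial : ℝ) := by positivity
  rw [Real.norm_eq_abs, Real.norm_eq_abs,
    abs_of_nonneg (mul_nonneg (by positivity) hG'.le),
    abs_of_nonneg (mul_nonneg (by positivity) hG.le)]
  calc l ^ (n + 1) / ((n + 1).factorial : ℝ) * Real.Gamma (α * ((n : ℕ) + 1 : ℕ) + 1)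
      ≤ l ^ (n + 1) / ((n + 1).factorial : ℝ) * (Real.Gamma (α * n + 1) * (α * n + 1) ^ α) := by
        exact mul_le_mul_of_nonneg_left h1 (by positivity)
    _ = (l ^ n / n.factorial * Real.Gamma (α * n + 1)) * (l * (α * n + 1) ^ α) / ((n : ℝ) + 1) := by
        rw [hfact, pow_succ]; field_simp
    _ ≤ (l ^ n / n.factorial * Real.Gamma (α * n + 1)) * (1 / 2 * ((n : ℝ) + 1)) / ((n : ℝ) + 1) := by
        exact (div_le_div_iff_of_pos_right hnp).mpr
          (mul_le_mul_of_nonneg_left h3 (mul_nonneg (by positivity) hG.le))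
    _ = 1 / 2 * (l ^ n / n.factorial * Real.Gamma (α * n + 1)) := by
        field_simp

/-- **Theorem 3(b) (Laplace transform of the harvested wind power).**
For `a, c > 0`, `k > 3` and `s ≥ 0`,
`(k/(3·a^{k/3}·c^k))·∫₀^∞ e^{−s·p}·p^{k/3−1}·e^{−p^{k/3}/(a^{k/3}·c^k)} dp
  = Σ_{n=0}^∞ ((−s·a·c³)^n/n!)·Γ(3n/k + 1)`,
where the series converges absolutely. -/
theorem wind_power_laplace_transform
    (a c k s : ℝ) (ha : 0 < a) (hc : 0 < c) (hk : 3 < k) (hs : 0 ≤ s) :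
    Summable (fun n : ℕ =>
      |(-(s * a * c ^ 3)) ^ n / (n.factorial : ℝ) * Real.Gamma (3 * n / k + 1)|) ∧
    (k / (3 * a ^ (k / 3) * c ^ k))
        * ∫ p in Set.Ioi (0 : ℝ),
            Real.exp (-(s * p)) * p ^ (k / 3 - 1)
              * Real.exp (-p ^ (k / 3) / (a ^ (k / 3) * c ^ k)) =
      ∑' n : ℕ, (-(s * a * c ^ 3)) ^ n / (n.factorial : ℝ) * Real.Gamma (3 * n / k + 1) := by
  have hk0 : (0 : ℝ) < k := by linarith
  set b : ℝ := a ^ (k / 3) * c ^ k with hb_def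
  have hb : 0 < b := by positivity
  have hl : 0 ≤ s * a * c ^ 3 := by positivity
  have hα0 : (0 : ℝ) < 3 / k := by positivity
  have hα1 : 3 / k < 1 := by rw [div_lt_one hk0]; linarith
  have hp1 : (1 : ℝ) ≤ k / 3 := by rw [le_div_iff₀ (by norm_num : (0:ℝ) < 3)]; linarith
  have hp3 : (0 : ℝ) < k / 3 := by linarith
  -- summability of the (positive) series
  have hsum1 : Summable (fun n : ℕ =>
      (s * a * c ^ 3) ^ n / (n.factorial : ℝ) * Real.Gamma (3 * n / k + 1)) := by
    refine (summable_gamma_series hl hα0 hα1).congr fun n => ?_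
    rw [show (3 : ℝ) / k * n = 3 * n / k by ring]
  have habs : ∀ n : ℕ,
      |(-(s * a * c ^ 3)) ^ n / (n.factorial : ℝ) * Real.Gamma (3 * n / k + 1)|
        = (s * a * c ^ 3) ^ n / (n.factorial : ℝ) * Real.Gamma (3 * n / k + 1) := by
    intro n
    have hg : 0 < Real.Gamma (3 * n / k + 1) := Real.Gamma_pos_of_pos (by positivity)
    rw [abs_mul, abs_div, abs_pow, abs_neg, abs_of_nonneg hl, abs_of_nonneg hg.le,
      Nat.abs_cast]
  refine ⟨(summable_congr fun n => habs n).mpr hsum1, ?_⟩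
  -- power identities
  have hb3k : b ^ ((3 : ℝ) / k) = a * c ^ 3 := by
    rw [hb_def, Real.mul_rpow (by positivity) (by positivity), ← Real.rpow_mul ha.le,
      ← Real.rpow_mul hc.le, show k / 3 * (3 / k) = 1 by field_simp,
      show k * (3 / k) = 3 by field_simp, Real.rpow_one,
      show (3:ℝ) = ((3:ℕ):ℝ) by norm_num, Real.rpow_natCast]
  have hbn : ∀ n : ℕ, b ^ (3 * (n : ℝ) / k) = (a * c ^ 3) ^ n := by
    intro n
    rw [show 3 * (n : ℝ) / k = (3 / k) * n by ring, Real.rpow_mul hb.le,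
      Real.rpow_natCast, hb3k]
  have hbpow : ∀ n : ℕ, b ^ (3 * (n : ℝ) / k + 1) = (a * c ^ 3) ^ n * b := by
    intro n
    rw [Real.rpow_add hb, Real.rpow_one, hbn n]
  -- the summand functions
  set F : ℕ → ℝ → ℝ := fun n p =>
    (-s) ^ n / (n.factorial : ℝ) * (p ^ ((n : ℝ) + k / 3 - 1) * Real.exp (-b⁻¹ * p ^ (k / 3)))
    with hF_def
  have hq : ∀ n : ℕ, (-1 : ℝ) < (n : ℝ) + k / 3 - 1 := by
    intro n
    have : (0 : ℝ) ≤ (n : ℝ) := Nat.cast_nonneg n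
    linarith
  have hbinv : (0 : ℝ) < b⁻¹ := by positivity
  have hF_int : ∀ n : ℕ, IntegrableOn (F n) (Set.Ioi 0) := by
    intro n
    exact (integrableOn_rpow_mul_exp_neg_mul_rpow (hq n) hp3 hbinv).const_mul _
  -- value of each term's integral
  have key : ∀ n : ℕ, ∫ p in Set.Ioi (0:ℝ),
      p ^ ((n : ℝ) + k / 3 - 1) * Real.exp (-b⁻¹ * p ^ (k / 3))
        = b ^ (3 * (n : ℝ) / k + 1) * (3 / k) * Real.Gamma (3 * n / k + 1) := by
    intro n
    rw [integral_rpow_mul_exp_neg_mul_rpow hp3 (hq n) hbinv, Real.inv_rpow hb.le,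
      ← Real.rpow_neg hb.le,
      show -(-((n:ℝ) + k / 3 - 1 + 1) / (k / 3)) = 3 * n / k + 1 by field_simp; ring,
      show ((n:ℝ) + k / 3 - 1 + 1) / (k / 3) = 3 * n / k + 1 by field_simp; ring,
      one_div_div]
  -- the norm integrals
  have hnorm : ∀ n : ℕ, ∫ p in Set.Ioi (0:ℝ), ‖F n p‖
      = s ^ n / (n.factorial : ℝ)
        * (b ^ (3 * (n : ℝ) / k + 1) * (3 / k) * Real.Gamma (3 * n / k + 1)) := by
    intro n
    rw [← key n, ← integral_const_mul]
    refine setIntegral_congr_fun measurableSet_Ioi fun p hp => ?_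
    have hp0 : (0 : ℝ) < p := hp
    rw [hF_def]
    rw [Real.norm_eq_abs, abs_mul, abs_div, abs_pow, abs_neg, abs_of_nonneg hs, Nat.abs_cast,
      abs_of_nonneg (mul_nonneg (Real.rpow_nonneg hp0.le _) (Real.exp_pos _).le)]
  have hnorm_sum : Summable fun n : ℕ => ∫ p in Set.Ioi (0:ℝ), ‖F n p‖ := by
    refine (hsum1.mul_left (b * (3 / k))).congr fun n => ?_
    rw [hnorm n, hbpow n, show s * a * c ^ 3 = s * (a * c ^ 3) by ring, mul_pow]
    ring
  -- pointwise series expansion of the integrand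
  have hpt : Set.EqOn
      (fun p => Real.exp (-(s * p)) * p ^ (k / 3 - 1) * Real.exp (-p ^ (k / 3) / b))
      (fun p => ∑' n : ℕ, F n p) (Set.Ioi 0) := by
    intro p hp
    have hp0 : (0 : ℝ) < p := hp
    have hexp : Real.exp (-(s * p)) = ∑' n : ℕ, (-(s * p)) ^ n / (n.factorial : ℝ) := by
      rw [Real.exp_eq_exp_ℝ, NormedSpace.exp_eq_tsum_div]
    simp only
    rw [hexp, ← tsum_mul_right, ← tsum_mul_right]
    refine tsum_congr fun n => ?_
    have h1 : (-(s * p)) ^ n = (-s) ^ n * p ^ n := by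
      rw [show -(s * p) = (-s) * p by ring, mul_pow]
    have h2 : (p : ℝ) ^ (n : ℕ) * p ^ (k / 3 - 1) = p ^ ((n : ℝ) + k / 3 - 1) := by
      rw [← Real.rpow_natCast p n, ← Real.rpow_add hp0]
      ring_nf
    have h3 : Real.exp (-p ^ (k / 3) / b) = Real.exp (-b⁻¹ * p ^ (k / 3)) := by
      congr 1; field_simp
    simp only [hF_def]
    rw [h1, h3, ← h2]
    ring
  -- exchange sum and integral
  have hI : (∫ p in Set.Ioi (0:ℝ),
      Real.exp (-(s * p)) * p ^ (k / 3 - 1) * Real.exp (-p ^ (k / 3) / b))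
        = ∑' n : ℕ, ∫ p in Set.Ioi (0:ℝ), F n p := by
    rw [setIntegral_congr_fun measurableSet_Ioi hpt]
    exact (integral_tsum_of_summable_integral_norm hF_int hnorm_sum).symm
  have hterm : ∀ n : ℕ, ∫ p in Set.Ioi (0:ℝ), F n p
      = (-s) ^ n / (n.factorial : ℝ)
        * (b ^ (3 * (n : ℝ) / k + 1) * (3 / k) * Real.Gamma (3 * n / k + 1)) := by
    intro n
    rw [hF_def]
    simp only
    rw [integral_const_mul, key n]
  rw [show 3 * a ^ (k / 3) * c ^ k = 3 * b by rw [hb_def]; ring]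
  rw [hI, ← tsum_mul_left]
  refine tsum_congr fun n => ?_
  rw [hterm n, hbpow n, show -(s * a * c ^ 3) = (-s) * (a * c ^ 3) by ring, mul_pow]
  have hfn : (0 : ℝ) < (n.factorial : ℝ) := by positivity
  field_simp
  ring
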